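/- With r = ((√q + √q')/δ)², δ² = 2(1+ρ(q,q')), and s another density with respect to μ, one has h²(s,r) = 1 − (2/δ) + (1/δ)[h²(s,q) + h²(s,q')] ≤ [h²(s,q)+h²(s,q')]/δ − h²(q,q')/4. -/
import Mathlib


open MeasureTheory

/-- The squared Hellinger distance between the probability measures with
densities `a` and `b` with respect to `μ`. -/
noncomputable def H2 {α : Type*} [MeasurableSpace α] (μ : Measure α) (a b : α → ℝ) : ℝ :=
  (1 / 2) * ∫ x, (Real.sqrt (a x) - Real.sqrt (b x)) ^ 2 ∂μ

lemma integrable_of_int_one {α : Type*} [MeasurableSpace α] {μ : Measure α} {f : α → ℝ}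
    (h : ∫ x, f x ∂μ = 1) : Integrable f μ := by
  by_contra hc
  rw [integral_undef hc] at h
  norm_num at h

lemma integrable_sqrt_mul {α : Type*} [MeasurableSpace α] {μ : Measure α} {a b : α → ℝ}
    (ha : Measurable a) (hb : Measurable b) (ha0 : ∀ x, 0 ≤ a x) (hb0 : ∀ x, 0 ≤ b x)
    (hia : Integrable a μ) (hib : Integrable b μ) :
    Integrable (fun x => Real.sqrt (a x) * Real.sqrt (b x)) μ := by
  have hsum : Integrable (fun x => a x + b x) μ := hia.add hib
  apply Integrable.mono' (hsum.div_const 2)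
  · exact ((ha.sqrt).mul (hb.sqrt)).aestronglyMeasurable
  · filter_upwards with x
    rw [Real.norm_eq_abs, abs_of_nonneg (mul_nonneg (Real.sqrt_nonneg _) (Real.sqrt_nonneg _))]
    nlinarith [sq_nonneg (Real.sqrt (a x) - Real.sqrt (b x)), Real.sq_sqrt (ha0 x),
      Real.sq_sqrt (hb0 x)]

lemma H2_eq {α : Type*} [MeasurableSpace α] {μ : Measure α} {a b : α → ℝ}
    (ha : Measurable a) (hb : Measurable b) (ha0 : ∀ x, 0 ≤ a x) (hb0 : ∀ x, 0 ≤ b x)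
    (hia : ∫ x, a x ∂μ = 1) (hib : ∫ x, b x ∂μ = 1) :
    H2 μ a b = 1 - ∫ x, Real.sqrt (a x) * Real.sqrt (b x) ∂μ := by
  have hIa := integrable_of_int_one hia
  have hIb := integrable_of_int_one hib
  have hM := integrable_sqrt_mul ha hb ha0 hb0 hIa hIb
  have h1 : ∀ x, (Real.sqrt (a x) - Real.sqrt (b x)) ^ 2
      = a x + b x - 2 * (Real.sqrt (a x) * Real.sqrt (b x)) := by
    intro x
    nlinarith [Real.sq_sqrt (ha0 x), Real.sq_sqrt (hb0 x)]
  have hab : Integrable (fun x => a x + b x) μ := hIa.add hIb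
  have h2M : Integrable (fun x => 2 * (Real.sqrt (a x) * Real.sqrt (b x))) μ := hM.const_mul 2
  unfold H2
  rw [integral_congr_ae (Filter.Eventually.of_forall h1),
    integral_sub hab h2M, integral_add hIa hIb, integral_const_mul _ _, hia, hib]
  ring

theorem stmt11 {α : Type*} [MeasurableSpace α] (μ : Measure α) (s q q' : α → ℝ)
    (hs : Measurable s) (hq : Measurable q) (hq' : Measurable q')
    (hs0 : ∀ x, 0 ≤ s x) (hq0 : ∀ x, 0 ≤ q x) (hq'0 : ∀ x, 0 ≤ q' x)
    (hsint : ∫ x, s x ∂μ = 1) (hqint : ∫ x, q x ∂μ = 1) (hq'int : ∫ x, q' x ∂μ = 1)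
    (δ : ℝ) (hδ0 : 0 ≤ δ)
    (hδ2 : δ ^ 2 = 2 * (1 + ∫ x, Real.sqrt (q x * q' x) ∂μ)) :
    H2 μ s (fun x => ((Real.sqrt (q x) + Real.sqrt (q' x)) / δ) ^ 2)
        = 1 - 2 / δ + (1 / δ) * (H2 μ s q + H2 μ s q') ∧
    H2 μ s (fun x => ((Real.sqrt (q x) + Real.sqrt (q' x)) / δ) ^ 2)
        ≤ (H2 μ s q + H2 μ s q') / δ - (1 - ∫ x, Real.sqrt (q x * q' x) ∂μ) / 4 := by
  have hρ0 : 0 ≤ ∫ x, Real.sqrt (q x * q' x) ∂μ :=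
    integral_nonneg fun x => Real.sqrt_nonneg _
  have hδpos : 0 < δ := by nlinarith
  have hδne : δ ≠ 0 := ne_of_gt hδpos
  have hIs := integrable_of_int_one hsint
  have hIq := integrable_of_int_one hqint
  have hIq' := integrable_of_int_one hq'int
  have hMsq := integrable_sqrt_mul hs hq hs0 hq0 hIs hIq
  have hMsq' := integrable_sqrt_mul hs hq' hs0 hq'0 hIs hIq'
  have hMqq' := integrable_sqrt_mul hq hq' hq0 hq'0 hIq hIq'
  have hρ2 : ∫ x, Real.sqrt (q x * q' x) ∂μ = ∫ x, Real.sqrt (q x) * Real.sqrt (q' x) ∂μ := by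
    apply integral_congr_ae
    filter_upwards with x
    exact Real.sqrt_mul (hq0 x) _
  set A := ∫ x, Real.sqrt (s x) * Real.sqrt (q x) ∂μ with hA
  set A' := ∫ x, Real.sqrt (s x) * Real.sqrt (q' x) ∂μ with hA'
  have hHq : H2 μ s q = 1 - A := H2_eq hs hq hs0 hq0 hsint hqint
  have hHq' : H2 μ s q' = 1 - A' := H2_eq hs hq' hs0 hq'0 hsint hq'int
  have hρ1 : 0 ≤ 1 + ∫ x, Real.sqrt (q x * q' x) ∂μ := by linarith
  have hpt : ∀ x, (Real.sqrt (s x)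
        - Real.sqrt (((Real.sqrt (q x) + Real.sqrt (q' x)) / δ) ^ 2)) ^ 2
      = s x + (1 / δ ^ 2) * (q x + q' x + 2 * (Real.sqrt (q x) * Real.sqrt (q' x)))
        - (2 / δ) * (Real.sqrt (s x) * Real.sqrt (q x)
          + Real.sqrt (s x) * Real.sqrt (q' x)) := by
    intro x
    have hv0 : 0 ≤ Real.sqrt (q x) := Real.sqrt_nonneg _
    have hw0 : 0 ≤ Real.sqrt (q' x) := Real.sqrt_nonneg _
    have hu := Real.sq_sqrt (hs0 x)
    have hvv := Real.sq_sqrt (hq0 x)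
    have hww := Real.sq_sqrt (hq'0 x)
    set u := Real.sqrt (s x)
    set v := Real.sqrt (q x)
    set w := Real.sqrt (q' x)
    rw [Real.sqrt_sq (by positivity : (0:ℝ) ≤ (v + w) / δ), ← hu, ← hvv, ← hww]
    field_simp
    ring
  have hH2r : H2 μ s (fun x => ((Real.sqrt (q x) + Real.sqrt (q' x)) / δ) ^ 2)
      = 1 - (A + A') / δ := by
    have hI1 : Integrable (fun x => q x + q' x) μ := hIq.add hIq'
    have hI2' : Integrable (fun x => 2 * (Real.sqrt (q x) * Real.sqrt (q' x))) μ :=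
      hMqq'.const_mul 2
    have hI2 : Integrable (fun x => q x + q' x
        + 2 * (Real.sqrt (q x) * Real.sqrt (q' x))) μ := hI1.add hI2'
    have hI3 : Integrable (fun x => 1 / δ ^ 2 * (q x + q' x
        + 2 * (Real.sqrt (q x) * Real.sqrt (q' x)))) μ := hI2.const_mul _
    have hI4 : Integrable (fun x => s x + 1 / δ ^ 2 * (q x + q' x
        + 2 * (Real.sqrt (q x) * Real.sqrt (q' x)))) μ := hIs.add hI3
    have hI5 : Integrable (fun x => Real.sqrt (s x) * Real.sqrt (q x)
        + Real.sqrt (s x) * Real.sqrt (q' x)) μ := hMsq.add hMsq'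
    have hI6 : Integrable (fun x => (2 / δ) * (Real.sqrt (s x) * Real.sqrt (q x)
        + Real.sqrt (s x) * Real.sqrt (q' x))) μ := hI5.const_mul _
    unfold H2
    rw [integral_congr_ae (Filter.Eventually.of_forall hpt),
      integral_sub hI4 hI6, integral_add hIs hI3, integral_const_mul _ _,
      integral_add hI1 hI2', integral_add hIq hIq', integral_const_mul _ _, integral_const_mul _ _,
      integral_add hMsq hMsq', hsint, hqint, hq'int, ← hA, ← hA', ← hρ2, hδ2]
    have h1ρne : (1 + ∫ x, Real.sqrt (q x * q' x) ∂μ) ≠ 0 := by nlinarith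
    field_simp
    ring
  refine ⟨?_, ?_⟩
  · rw [hH2r, hHq, hHq']
    field_simp
    ring
  · rw [hH2r, hHq, hHq']
    have h8 : (0:ℝ) ≤ (δ - 2) ^ 2 * (δ + 4) := by positivity
    have hc : 2 / δ * δ = 2 := div_mul_cancel₀ 2 hδne
    have hAA : ((1 - A) + (1 - A')) / δ = 2 / δ - (A + A') / δ := by ring
    rw [hAA]
    have hkey : (1:ℝ) ≤ 2 / δ - (1 - ∫ x, Real.sqrt (q x * q' x) ∂μ) / 4 := by
      nlinarith [hc, h8, hδpos, hδ2, mul_pos hδpos hδpos]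
    linarith
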